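/- Let G be a group acting on a C*-algebra A, and let τ be a positive linear trace with domain the smallest G-invariant hereditary symmetric ideal J_A^G(e) containing a positive element e ∈ A. If sup_{t∈G} τ(α_t(e)) < ∞, then τ is bounded on the G-orbit of every element of J_A^G(e), i.e., sup_{t∈G} |τ(α_t(a))| < ∞ for all a ∈ J_A^G(e). -/

import Mathlib

open ComplexOrder

/-- Let `G` act on a C*-algebra `A` by *-automorphisms, let `J = J_A^G(e)` be
the smallest `G`-invariant hereditary symmetric ideal containing a positive element `e`, and
let `τ` be a positive linear trace with domain `J`. If `sup_t τ(t•e) < ∞` then `τ` is bounded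
on the `G`-orbit of every element of `J`. -/
theorem stmt19 {A G : Type*} [NonUnitalCStarAlgebra A] [PartialOrder A] [StarOrderedRing A]
    [Group G] [DistribMulAction G A]
    (hactmul : ∀ (t : G) (x y : A), t • (x * y) = (t • x) * (t • y))
    (hactstar : ∀ (t : G) (x : A), t • (star x) = star (t • x))
    (hactsmul : ∀ (t : G) (c : ℂ) (x : A), t • (c • x) = c • (t • x))
    (e : A) (hepos : 0 ≤ e)
    (J : Submodule ℂ A)
    (hJideal : ∀ x ∈ J, ∀ y : A, y * x ∈ J ∧ x * y ∈ J)
    (hJstar : ∀ x ∈ J, star x ∈ J)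
    (hJher : ∀ a b : A, 0 ≤ a → a ≤ b → b ∈ J → a ∈ J)
    (hJsym : ∀ x : A, star x * x ∈ J → x * star x ∈ J)
    (hJinv : ∀ (t : G), ∀ x ∈ J, t • x ∈ J)
    (heJ : e ∈ J)
    (hJmin : ∀ J' : Submodule ℂ A,
      (∀ x ∈ J', ∀ y : A, y * x ∈ J' ∧ x * y ∈ J') →
      (∀ x ∈ J', star x ∈ J') →
      (∀ a b : A, 0 ≤ a → a ≤ b → b ∈ J' → a ∈ J') →
      (∀ x : A, star x * x ∈ J' → x * star x ∈ J') →
      (∀ (t : G), ∀ x ∈ J', t • x ∈ J') →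
      e ∈ J' → J ≤ J')
    (τ : A → ℂ)
    (hadd : ∀ a ∈ J, ∀ b ∈ J, τ (a + b) = τ a + τ b)
    (hsmul : ∀ c : ℂ, ∀ a ∈ J, τ (c • a) = c * τ a)
    (hpos : ∀ a ∈ J, 0 ≤ a → 0 ≤ τ a)
    (htr : ∀ x : A, star x * x ∈ J → τ (star x * x) = τ (x * star x))
    (hbd : ∃ C : ℝ, ∀ t : G, ‖τ (t • e)‖ ≤ C) :
    ∀ a ∈ J, ∃ C : ℝ, ∀ t : G, ‖τ (t • a)‖ ≤ C := by
  classical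
  obtain ⟨C₀, hC₀⟩ := hbd
  -- monotonicity of the norm on nonnegative complex numbers
  have normle : ∀ z w : ℂ, 0 ≤ z → z ≤ w → ‖z‖ ≤ ‖w‖ := by
    intro z w hz hw
    have h0 : 0 ≤ w := hz.trans hw
    rw [Complex.nonneg_iff] at hz h0
    have e1 : ‖z‖ = z.re := by
      rw [show z = ((z.re : ℝ) : ℂ) from Complex.ext rfl hz.2.symm]
      simp [abs_of_nonneg hz.1]
    have e2 : ‖w‖ = w.re := by
      rw [show w = ((w.re : ℝ) : ℂ) from Complex.ext rfl h0.2.symm]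
      simp [abs_of_nonneg h0.1]
    rw [Complex.le_def] at hw
    rw [e1, e2]; exact hw.1
  have τ0 : τ 0 = 0 := by
    have := hsmul 0 0 J.zero_mem
    simpa using this
  have τmono : ∀ a b : A, a ∈ J → b ∈ J → 0 ≤ a → a ≤ b → ‖τ a‖ ≤ ‖τ b‖ := by
    intro a b haJ hbJ ha hab
    have hba : b - a ∈ J := sub_mem hbJ haJ
    have h1 : 0 ≤ τ a := hpos a haJ ha
    have h2 : 0 ≤ τ (b - a) := hpos _ hba (sub_nonneg.mpr hab)
    have h3 : τ b = τ a + τ (b - a) := by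
      have h := hadd a haJ (b - a) hba
      have e : a + (b - a) = b := by abel
      rw [e] at h; exact h
    refine normle _ _ h1 ?_
    rw [h3]; exact le_add_of_nonneg_right h2
  have hactpos : ∀ (t : G) (a : A), 0 ≤ a → 0 ≤ t • a := by
    intro t a ha
    have hbb := CFC.sqrt_mul_sqrt_self a ha
    have hsa : star (CFC.sqrt a) = CFC.sqrt a :=
      (IsSelfAdjoint.of_nonneg (CFC.sqrt_nonneg a)).star_eq
    calc (0 : A) ≤ star (t • CFC.sqrt a) * (t • CFC.sqrt a) := star_mul_self_nonneg _
    _ = t • a := by rw [← hactstar, hsa, ← hactmul, hbb]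
  have hactle : ∀ (t : G) (a b : A), a ≤ b → t • a ≤ t • b := by
    intro t a b hab
    have h := hactpos t (b - a) (sub_nonneg.mpr hab)
    rw [smul_sub] at h
    exact sub_nonneg.mp h
  set P : Set A := {a | a ∈ J ∧ 0 ≤ a ∧ ∃ C : ℝ, ∀ t : G, ‖τ (t • a)‖ ≤ C} with hPdef
  have hPinv : ∀ (t : G), ∀ a ∈ P, t • a ∈ P := by
    rintro t a ⟨haJ, hapos, C, hC⟩
    exact ⟨hJinv t a haJ, hactpos t a hapos, C, fun s => by rw [smul_smul]; exact hC (s * t)⟩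
  have hPadd : ∀ a ∈ P, ∀ b ∈ P, a + b ∈ P := by
    rintro a ⟨haJ, hapos, C, hC⟩ b ⟨hbJ, hbpos, D, hD⟩
    refine ⟨add_mem haJ hbJ, add_nonneg hapos hbpos, C + D, fun t => ?_⟩
    rw [smul_add, hadd _ (hJinv t a haJ) _ (hJinv t b hbJ)]
    exact (norm_add_le _ _).trans (add_le_add (hC t) (hD t))
  have hPher : ∀ a b : A, 0 ≤ a → a ≤ b → b ∈ P → a ∈ P := by
    rintro a b hapos hab ⟨hbJ, hbpos, C, hC⟩
    have haJ : a ∈ J := hJher a b hapos hab hbJ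
    exact ⟨haJ, hapos, C, fun t =>
      (τmono _ _ (hJinv t a haJ) (hJinv t b hbJ) (hactpos t a hapos)
        (hactle t a b hab)).trans (hC t)⟩
  have hPsym : ∀ w : A, star w * w ∈ P → w * star w ∈ P := by
    rintro w ⟨hJm, hposm, C, hC⟩
    refine ⟨hJsym w hJm, mul_star_self_nonneg w, C, fun t => ?_⟩
    have h1 : t • (w * star w) = (t • w) * star (t • w) := by rw [hactmul, hactstar]
    have h2 : star (t • w) * (t • w) = t • (star w * w) := by rw [hactmul, hactstar]
    rw [h1, ← htr (t • w) (by rw [h2]; exact hJinv t _ hJm), h2]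
    exact hC t
  have hPsym' : ∀ w : A, w * star w ∈ P → star w * w ∈ P := by
    intro w h
    have h2 := hPsym (star w) (by rw [star_star]; exact h)
    rw [star_star] at h2; exact h2
  have hPconj : ∀ a ∈ P, ∀ x : A, x * a * star x ∈ P := by
    rintro a ⟨haJ, hapos, C, hC⟩ x
    set b := CFC.sqrt a with hbdef
    have hbb : b * b = a := CFC.sqrt_mul_sqrt_self a hapos
    have hsb : star b = b := (IsSelfAdjoint.of_nonneg (CFC.sqrt_nonneg a)).star_eq
    have key : x * a * star x = (x * b) * star (x * b) := by
      rw [star_mul, hsb, ← hbb]; noncomm_ring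
    have hxa : x * a ∈ J := (hJideal a haJ x).1
    have hxax : x * a * star x ∈ J := (hJideal _ hxa (star x)).2
    set r := ‖star x * x‖ with hrdef
    have hr0 : (0 : ℝ) ≤ r := norm_nonneg _
    set c := b * (star x * x) * b with hcdef
    have hceq : c = star (x * b) * (x * b) := by
      rw [star_mul, hsb, hcdef]; noncomm_ring
    have hcpos : 0 ≤ c := hceq ▸ star_mul_self_nonneg _
    have hcle : c ≤ (r : ℂ) • a := by
      have h := CStarAlgebra.star_left_conjugate_le_norm_smul (a := b) (b := star x * x)
        (IsSelfAdjoint.star_mul_self x)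
      rw [hsb, hbb] at h
      rw [Complex.coe_smul]
      exact h
    have hDJ : (r : ℂ) • a ∈ J := J.smul_mem _ haJ
    have hcJ : c ∈ J := hJher _ _ hcpos hcle hDJ
    refine ⟨hxax, key ▸ mul_star_self_nonneg (x * b), r * C, fun t => ?_⟩
    have h2 : star (t • (x * b)) * (t • (x * b)) = t • c := by
      rw [← hactstar, ← hactmul, ← hceq]
    have h3 : star (t • (x * b)) * (t • (x * b)) ∈ J := by
      rw [h2]; exact hJinv t c hcJ
    calc ‖τ (t • (x * a * star x))‖
        = ‖τ ((t • (x * b)) * star (t • (x * b)))‖ := by rw [key, hactmul, hactstar]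
      _ = ‖τ (star (t • (x * b)) * (t • (x * b)))‖ := by rw [htr _ h3]
      _ = ‖τ (t • c)‖ := by rw [h2]
      _ ≤ ‖τ (t • ((r : ℂ) • a))‖ :=
          τmono _ _ (hJinv t c hcJ) (hJinv t _ hDJ) (hactpos t c hcpos)
            (hactle t _ _ hcle)
      _ = r * ‖τ (t • a)‖ := by
          rw [hactsmul, hsmul _ _ (hJinv t a haJ), norm_mul]
          simp [abs_of_nonneg hr0]
      _ ≤ r * C := mul_le_mul_of_nonneg_left (hC t) hr0
  set Q : Submodule ℂ A := Submodule.span ℂ P with hQdef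
  have hPQ : P ⊆ (Q : Set A) := Submodule.subset_span
  have hQle : Q ≤ J := Submodule.span_le.mpr (fun a ha => ha.1)
  have hQbd : ∀ x ∈ Q, ∃ C : ℝ, ∀ t : G, ‖τ (t • x)‖ ≤ C := by
    intro x hx
    induction hx using Submodule.span_induction with
    | mem a ha => exact ha.2.2
    | zero => exact ⟨0, fun t => by simp [τ0]⟩
    | add y z hy hz ihy ihz =>
      obtain ⟨Cy, hCy⟩ := ihy
      obtain ⟨Cz, hCz⟩ := ihz
      refine ⟨Cy + Cz, fun t => ?_⟩
      rw [smul_add, hadd _ (hJinv t y (hQle hy)) _ (hJinv t z (hQle hz))]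
      exact (norm_add_le _ _).trans (add_le_add (hCy t) (hCz t))
    | smul d y hy ihy =>
      obtain ⟨Cy, hCy⟩ := ihy
      refine ⟨‖d‖ * Cy, fun t => ?_⟩
      rw [hactsmul, hsmul _ _ (hJinv t y (hQle hy)), norm_mul]
      exact mul_le_mul_of_nonneg_left (hCy t) (norm_nonneg d)
  have hQstar : ∀ x ∈ Q, star x ∈ Q := by
    intro x hx
    induction hx using Submodule.span_induction with
    | mem a ha => rw [(IsSelfAdjoint.of_nonneg ha.2.1).star_eq]; exact hPQ ha
    | zero => rw [star_zero]; exact Q.zero_mem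
    | add y z hy hz ihy ihz => rw [star_add]; exact add_mem ihy ihz
    | smul d y hy ihy => rw [star_smul]; exact Q.smul_mem _ ihy
  -- polarization : left multiples of elements of P lie in Q
  have hQmulP : ∀ a ∈ P, ∀ y : A, y * a ∈ Q := by
    intro a haP y
    obtain ⟨haJ, hapos, -⟩ := id haP
    set b := CFC.sqrt a with hbdef
    have hbb : b * b = a := CFC.sqrt_mul_sqrt_self a hapos
    have hsb : star b = b := (IsSelfAdjoint.of_nonneg (CFC.sqrt_nonneg a)).star_eq
    set u := y * b with hudef
    have huP : u * star u ∈ P := by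
      have h : u * star u = y * a * star y := by
        rw [star_mul, hsb, ← hbb, hudef]; noncomm_ring
      rw [h]; exact hPconj a haP y
    have huP' : star u * u ∈ P := hPsym' u huP
    have hzP : ∀ c : ℂ, star c * c = 1 → (u + c • b) * star (u + c • b) ∈ P := by
      intro c hc
      have hq : star (c • b) * (c • b) = a := by
        rw [star_smul, hsb, smul_mul_smul_comm, hc, one_smul, hbb]
      have hnn := star_mul_self_nonneg (u - c • b)
      have par : ∀ p q : A, star (p + q) * (p + q) + star (p - q) * (p - q)
          = (star p * p + star q * q) + (star p * p + star q * q) := by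
        intro p q
        rw [star_add, star_sub]
        noncomm_ring
      have hexp := par u (c • b)
      rw [hq] at hexp
      have h1 : star (u + c • b) * (u + c • b) ≤ (star u * u + a) + (star u * u + a) := by
        calc star (u + c • b) * (u + c • b)
            ≤ star (u + c • b) * (u + c • b) + star (u - c • b) * (u - c • b) :=
              le_add_of_nonneg_right hnn
          _ = _ := hexp
      have hsum : (star u * u + a) + (star u * u + a) ∈ P :=
        hPadd _ (hPadd _ huP' _ haP) _ (hPadd _ huP' _ haP)
      exact hPsym _ (hPher _ _ (star_mul_self_nonneg _) h1 hsum)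
    have hya : y * a = u * b := by rw [hudef, ← hbb]; noncomm_ring
    have hid : u * b = (4⁻¹ : ℂ) • ((u + (1:ℂ) • b) * star (u + (1:ℂ) • b))
        + (Complex.I / 4) • ((u + Complex.I • b) * star (u + Complex.I • b))
        + (-(4⁻¹ : ℂ)) • ((u + (-1:ℂ) • b) * star (u + (-1:ℂ) • b))
        + (-(Complex.I / 4)) • ((u + (-Complex.I) • b) * star (u + (-Complex.I) • b)) := by
      simp only [star_add, star_smul, hsb, map_one, map_neg, Complex.conj_I,
        mul_add, add_mul, smul_add, mul_smul_comm, smul_mul_assoc, smul_smul]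
      match_scalars <;> simp [Complex.ext_iff] <;> ring
    rw [hya, hid]
    refine add_mem (add_mem (add_mem (Q.smul_mem _ (hPQ (hzP 1 (by simp))))
      (Q.smul_mem _ (hPQ (hzP Complex.I (by simp))))) (Q.smul_mem _ (hPQ (hzP (-1) (by simp)))))
      (Q.smul_mem _ (hPQ (hzP (-Complex.I) (by simp))))
  have hQmul : ∀ x ∈ Q, ∀ y : A, y * x ∈ Q ∧ x * y ∈ Q := by
    have hL : ∀ y : A, ∀ x ∈ Q, y * x ∈ Q := by
      intro y x hx
      induction hx using Submodule.span_induction with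
      | mem a ha => exact hQmulP a ha y
      | zero => rw [mul_zero]; exact Q.zero_mem
      | add z w hz hw ihz ihw => rw [mul_add]; exact add_mem ihz ihw
      | smul d z hz ihz => rw [mul_smul_comm]; exact Q.smul_mem _ ihz
    intro x hx y
    refine ⟨hL y x hx, ?_⟩
    have h := hQstar _ (hL (star y) (star x) (hQstar x hx))
    rwa [star_mul, star_star, star_star] at h
  have hQher : ∀ a b : A, 0 ≤ a → a ≤ b → b ∈ Q → a ∈ Q := by
    intro a b ha hab hbQ
    obtain ⟨C, hC⟩ := hQbd b hbQ
    have hbJ : b ∈ J := hQle hbQ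
    have haJ : a ∈ J := hJher a b ha hab hbJ
    exact hPQ ⟨haJ, ha, C, fun t =>
      (τmono _ _ (hJinv t a haJ) (hJinv t b hbJ) (hactpos t a ha)
        (hactle t a b hab)).trans (hC t)⟩
  have hQsym : ∀ x : A, star x * x ∈ Q → x * star x ∈ Q := by
    intro x hx
    obtain ⟨C, hC⟩ := hQbd _ hx
    exact hPQ (hPsym x ⟨hQle hx, star_mul_self_nonneg x, C, hC⟩)
  have hQinv : ∀ (t : G), ∀ x ∈ Q, t • x ∈ Q := by
    intro t x hx
    induction hx using Submodule.span_induction with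
    | mem a ha => exact hPQ (hPinv t a ha)
    | zero => rw [smul_zero]; exact Q.zero_mem
    | add z w hz hw ihz ihw => rw [smul_add]; exact add_mem ihz ihw
    | smul d z hz ihz => rw [hactsmul]; exact Q.smul_mem _ ihz
  have heQ : e ∈ Q := hPQ ⟨heJ, hepos, C₀, hC₀⟩
  have hJQ : J ≤ Q := hJmin Q hQmul hQstar hQher hQsym hQinv heQ
  intro a ha
  exact hQbd a (hJQ ha)
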